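/- arXiv:2403.00480 — 2 statements merged into one kernel-verified Lean document; each statement's English description precedes it below -/
import Mathlib

section
/- Under the local Lipschitz chart hypotheses: (i) for every 0 < r ≤ R̂/(2+Λ₀), B_D(0, (1+Λ₀)⁻¹ r) ⊆ U(r) ⊆ B_D(0, (√2+Λ₀) r); (ii) setting Λ₁ := max(Λ₀, 1/2), for every x ∈ U(R̂/(6+4Λ₀)) one has (1+Λ₁²)^{−1/2} ρ_D(x) ≤ δ_D(x) ≤ ρ_D(x). -/
open MeasureTheory Metric Set Filter
open scoped ENNReal NNReal Topology

noncomputable section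

/-- The first `n` coordinates of a point of `ℝ^(n+1)`. -/
def tilde {n : ℕ} (x : EuclideanSpace ℝ (Fin (n + 1))) : EuclideanSpace ℝ (Fin n) :=
  WithLp.toLp 2 (fun i : Fin n => x i.castSucc)

/-- The last ("vertical") coordinate of a point of `ℝ^(n+1)`. -/
def vert {n : ℕ} (x : EuclideanSpace ℝ (Fin (n + 1))) : ℝ := x (Fin.last n)

/-- The vertical distance `ρ_D(x) = x_d - Ψ(x̃)` in the chart. -/
def vrho {n : ℕ} (Ψ : EuclideanSpace ℝ (Fin n) → ℝ) (x : EuclideanSpace ℝ (Fin (n + 1))) : ℝ :=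
  vert x - Ψ (tilde x)

/-- The box `U(a,b) = {x ∈ D : |x̃| < a, 0 < ρ_D(x) < b}`. -/
def Ubox (n : ℕ) (Ψ : EuclideanSpace ℝ (Fin n) → ℝ)
    (D : Set (EuclideanSpace ℝ (Fin (n + 1)))) (a b : ℝ) :
    Set (EuclideanSpace ℝ (Fin (n + 1))) :=
  {x | x ∈ D ∧ ‖tilde x‖ < a ∧ 0 < vrho Ψ x ∧ vrho Ψ x < b}

lemma sq_norm_euc {m : ℕ} (v : EuclideanSpace ℝ (Fin m)) : ‖v‖ ^ 2 = ∑ i, v i ^ 2 := by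
  rw [EuclideanSpace.norm_eq, Real.sq_sqrt (by positivity)]
  simp [Real.norm_eq_abs, sq_abs]

lemma norm_split {m : ℕ} (x : EuclideanSpace ℝ (Fin (m + 1))) :
    ‖x‖ ^ 2 = ‖tilde x‖ ^ 2 + vert x ^ 2 := by
  rw [sq_norm_euc, sq_norm_euc, Fin.sum_univ_castSucc]
  simp [tilde, vert, sq_abs]

lemma norm_tilde_le {m : ℕ} (x : EuclideanSpace ℝ (Fin (m + 1))) : ‖tilde x‖ ≤ ‖x‖ := by
  have h := norm_split x
  nlinarith [norm_nonneg x, norm_nonneg (tilde x), sq_nonneg (vert x)]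

lemma abs_vert_le {m : ℕ} (x : EuclideanSpace ℝ (Fin (m + 1))) : |vert x| ≤ ‖x‖ := by
  have h := norm_split x
  nlinarith [norm_nonneg x, norm_nonneg (tilde x), abs_nonneg (vert x), sq_abs (vert x)]

lemma tilde_sub {m : ℕ} (x y : EuclideanSpace ℝ (Fin (m + 1))) :
    tilde (x - y) = tilde x - tilde y := rfl

lemma vert_sub {m : ℕ} (x y : EuclideanSpace ℝ (Fin (m + 1))) :
    vert (x - y) = vert x - vert y := rfl

lemma tilde_add {m : ℕ} (x y : EuclideanSpace ℝ (Fin (m + 1))) :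
    tilde (x + y) = tilde x + tilde y := rfl

lemma vert_add {m : ℕ} (x y : EuclideanSpace ℝ (Fin (m + 1))) :
    vert (x + y) = vert x + vert y := rfl

/-- Cauchy–Schwarz type bound. -/
lemma key_cs (Λ a b : ℝ) (hΛ : 0 ≤ Λ) (ha : 0 ≤ a) (hb : 0 ≤ b) :
    Λ * a + b ≤ Real.sqrt (1 + Λ ^ 2) * Real.sqrt (a ^ 2 + b ^ 2) := by
  rw [← Real.sqrt_mul (by positivity)]
  rw [← Real.sqrt_sq (by positivity : (0:ℝ) ≤ Λ * a + b)]
  apply Real.sqrt_le_sqrt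
  nlinarith [sq_nonneg (a - Λ * b)]

set_option maxHeartbeats 1000000 in
theorem stmt_0 {n : ℕ} (hn : 1 ≤ n) (Λ₀ Rh : ℝ) (hΛ₀ : 0 < Λ₀) (hRh : 0 < Rh)
    (Ψ : EuclideanSpace ℝ (Fin n) → ℝ) (hΨ0 : Ψ 0 = 0)
    (hΨlip : ∀ y z : EuclideanSpace ℝ (Fin n), |Ψ y - Ψ z| ≤ Λ₀ * ‖y - z‖)
    (D : Set (EuclideanSpace ℝ (Fin (n + 1)))) (hDopen : IsOpen D)
    (h0 : (0 : EuclideanSpace ℝ (Fin (n + 1))) ∈ frontier D)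
    (hchart : D ∩ ball (0 : EuclideanSpace ℝ (Fin (n + 1))) Rh
      = {y ∈ ball (0 : EuclideanSpace ℝ (Fin (n + 1))) Rh | Ψ (tilde y) < vert y}) :
    (∀ r : ℝ, 0 < r → r ≤ Rh / (2 + Λ₀) →
      D ∩ ball (0 : EuclideanSpace ℝ (Fin (n + 1))) ((1 + Λ₀)⁻¹ * r) ⊆ Ubox n Ψ D r r ∧
      Ubox n Ψ D r r ⊆ D ∩ ball (0 : EuclideanSpace ℝ (Fin (n + 1))) ((Real.sqrt 2 + Λ₀) * r)) ∧
    (∀ x ∈ Ubox n Ψ D (Rh / (6 + 4 * Λ₀)) (Rh / (6 + 4 * Λ₀)),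
      (Real.sqrt (1 + max Λ₀ (1 / 2) ^ 2))⁻¹ * vrho Ψ x ≤ infDist x (frontier D) ∧
      infDist x (frontier D) ≤ vrho Ψ x) := by
  -- basic facts
  have hΨbd : ∀ y : EuclideanSpace ℝ (Fin n), |Ψ y| ≤ Λ₀ * ‖y‖ := by
    intro y
    have := hΨlip y 0
    simpa [hΨ0] using this
  -- membership criteria
  have memD : ∀ y : EuclideanSpace ℝ (Fin (n + 1)), ‖y‖ < Rh → Ψ (tilde y) < vert y → y ∈ D := by
    intro y hy hv
    have : y ∈ {y ∈ ball (0 : EuclideanSpace ℝ (Fin (n + 1))) Rh | Ψ (tilde y) < vert y} :=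
      ⟨mem_ball_zero_iff.2 hy, hv⟩
    rw [← hchart] at this
    exact this.1
  have memD' : ∀ y : EuclideanSpace ℝ (Fin (n + 1)), y ∈ D → ‖y‖ < Rh → Ψ (tilde y) < vert y := by
    intro y hyD hy
    have : y ∈ D ∩ ball (0 : EuclideanSpace ℝ (Fin (n + 1))) Rh := ⟨hyD, mem_ball_zero_iff.2 hy⟩
    rw [hchart] at this
    exact this.2
  have hsqrt2 : (1:ℝ) ≤ Real.sqrt 2 := by
    rw [show (1:ℝ) = Real.sqrt 1 by simp]
    exact Real.sqrt_le_sqrt (by norm_num)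
  have hsqrt2' : Real.sqrt 2 ≤ 2 := by
    nlinarith [Real.sq_sqrt (by norm_num : (0:ℝ) ≤ 2), Real.sqrt_nonneg 2]
  -- Part (i)
  have part1 : ∀ r : ℝ, 0 < r → r ≤ Rh / (2 + Λ₀) →
      D ∩ ball (0 : EuclideanSpace ℝ (Fin (n + 1))) ((1 + Λ₀)⁻¹ * r) ⊆ Ubox n Ψ D r r ∧
      Ubox n Ψ D r r ⊆ D ∩ ball (0 : EuclideanSpace ℝ (Fin (n + 1))) ((Real.sqrt 2 + Λ₀) * r) := by
    intro r hr hrR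
    have hrRh : r < Rh := by
      have h1 : Rh / (2 + Λ₀) < Rh := by
        rw [div_lt_iff₀ (by linarith)]
        nlinarith
      linarith
    constructor
    · rintro x ⟨hxD, hxb⟩
      rw [mem_ball_zero_iff] at hxb
      have hxr : ‖x‖ < r := by
        have : (1 + Λ₀)⁻¹ * r < r := by
          rw [inv_mul_lt_iff₀ (by linarith)]
          nlinarith
        linarith
      have hρpos : Ψ (tilde x) < vert x := memD' x hxD (by linarith)
      refine ⟨hxD, lt_of_le_of_lt (norm_tilde_le x) hxr, by simpa [vrho] using hρpos, ?_⟩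
      -- ρ < r
      have h1 : |vert x| ≤ ‖x‖ := abs_vert_le x
      have h2 : |Ψ (tilde x)| ≤ Λ₀ * ‖tilde x‖ := hΨbd _
      have h3 : ‖tilde x‖ ≤ ‖x‖ := norm_tilde_le x
      have h4 : (1 + Λ₀) * ‖x‖ < r := by
        have := mul_lt_mul_of_pos_left hxb (show (0:ℝ) < 1 + Λ₀ by linarith)
        rwa [← mul_assoc, mul_inv_cancel₀ (by linarith : (1:ℝ) + Λ₀ ≠ 0), one_mul] at this
      have := abs_le.1 h1
      have := abs_le.1 h2
      simp only [vrho]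
      nlinarith [norm_nonneg x]
    · rintro x ⟨hxD, hxt, hρ0, hρr⟩
      refine ⟨hxD, mem_ball_zero_iff.2 ?_⟩
      have h2 : |Ψ (tilde x)| ≤ Λ₀ * ‖tilde x‖ := hΨbd _
      have h2' := abs_le.1 h2
      have hvert : |vert x| < (1 + Λ₀) * r := by
        rw [abs_lt]
        have : vert x = vrho Ψ x + Ψ (tilde x) := by simp [vrho]
        constructor <;> nlinarith [norm_nonneg (tilde x)]
      have hsq : ‖x‖ ^ 2 < ((Real.sqrt 2 + Λ₀) * r) ^ 2 := by
        rw [norm_split x]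
        have ha := abs_lt.1 hvert
        have h22 : Real.sqrt 2 ^ 2 = 2 := Real.sq_sqrt (by norm_num)
        have ht2 : ‖tilde x‖ ^ 2 < r ^ 2 := by nlinarith [norm_nonneg (tilde x)]
        have hv2 : vert x ^ 2 < ((1 + Λ₀) * r) ^ 2 := by nlinarith [ha.1, ha.2]
        nlinarith [mul_pos (mul_pos hΛ₀ hr) hr, hsqrt2]
      exact lt_of_pow_lt_pow_left₀ 2 (by positivity) hsq
  refine ⟨part1, ?_⟩
  -- Part (ii)
  intro x hx
  set R₁ : ℝ := Rh / (6 + 4 * Λ₀) with hR₁def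
  have hden : (0:ℝ) < 6 + 4 * Λ₀ := by linarith
  have hR₁pos : 0 < R₁ := div_pos hRh hden
  have hR₁Rh : R₁ * (6 + 4 * Λ₀) = Rh := div_mul_cancel₀ Rh (ne_of_gt hden)
  have hR₁le : R₁ ≤ Rh / (2 + Λ₀) := by
    rw [hR₁def]
    gcongr
    · linarith
    · linarith
  obtain ⟨hxD, hxt, hρ0, hρr⟩ := hx
  set ρ := vrho Ψ x with hρdef
  -- x is in the outer ball
  have hxball : ‖x‖ < (Real.sqrt 2 + Λ₀) * R₁ := by
    have := (part1 R₁ hR₁pos hR₁le).2 ⟨hxD, hxt, hρ0, hρr⟩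
    exact mem_ball_zero_iff.1 this.2
  set Λ₁ : ℝ := max Λ₀ (1/2) with hΛ₁def
  have hΛ₁0 : 0 < Λ₁ := lt_of_lt_of_le hΛ₀ (le_max_left _ _)
  have hΛ₀₁ : Λ₀ ≤ Λ₁ := le_max_left _ _
  set s : ℝ := Real.sqrt (1 + Λ₁ ^ 2) with hsdef
  have hs1 : 1 ≤ s := by
    have h1 : (1:ℝ) ≤ 1 + Λ₁ ^ 2 := by nlinarith [sq_nonneg Λ₁]
    calc (1:ℝ) = Real.sqrt 1 := by simp
      _ ≤ Real.sqrt (1 + Λ₁ ^ 2) := Real.sqrt_le_sqrt h1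
      _ = s := hsdef.symm
  have hspos : 0 < s := by linarith
  have hsc : s⁻¹ * s = 1 := inv_mul_cancel₀ (ne_of_gt hspos)
  have hcle1 : s⁻¹ ≤ 1 := by
    rw [inv_le_one_iff₀]; right; exact hs1
  have hcpos : 0 < s⁻¹ := inv_pos.2 hspos
  -- the vertical unit vector
  set e : EuclideanSpace ℝ (Fin (n + 1)) := EuclideanSpace.single (Fin.last n) (1:ℝ) with hedef
  have htilde_smul : ∀ t : ℝ, tilde (t • e) = 0 := by
    intro t
    ext i
    have hne : (i.castSucc : Fin (n + 1)) ≠ Fin.last n := ne_of_lt (Fin.castSucc_lt_last i)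
    simp [tilde, hedef, PiLp.smul_apply, EuclideanSpace.single_apply, hne]
  have hvert_smul : ∀ t : ℝ, vert (t • e) = t := by
    intro t
    simp [vert, hedef, PiLp.smul_apply, EuclideanSpace.single_apply]
  have hnorm_smul : ∀ t : ℝ, ‖t • e‖ = |t| := by
    intro t
    rw [norm_smul, hedef, EuclideanSpace.norm_single]
    simp [Real.norm_eq_abs]
  -- bound on ‖x‖ + ρ
  have hxρRh : ‖x‖ + ρ < Rh := by
    have h1 : (Real.sqrt 2 + Λ₀) * R₁ + R₁ < Rh := by nlinarith
    linarith
  constructor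
  · -- lower bound
    have hfne : (frontier D).Nonempty := ⟨0, h0⟩
    by_contra hcon
    push_neg at hcon
    obtain ⟨y, hyF, hyd⟩ := (infDist_lt_iff hfne).1 hcon
    -- show y ∈ D, contradiction
    have hynotD : y ∉ D := by
      rw [hDopen.frontier_eq] at hyF
      exact hyF.2
    apply hynotD
    have hdist : ‖y - x‖ < s⁻¹ * ρ := by
      rw [← dist_eq_norm, dist_comm]
      exact hyd
    have hcρle : s⁻¹ * ρ ≤ ρ := by
      calc s⁻¹ * ρ ≤ 1 * ρ := mul_le_mul_of_nonneg_right hcle1 hρ0.le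
        _ = ρ := one_mul ρ
    -- y in the ball of radius Rh
    have hyRh : ‖y‖ < Rh := by
      have : ‖y‖ ≤ ‖x‖ + ‖y - x‖ := by
        calc ‖y‖ = ‖(y - x) + x‖ := by rw [sub_add_cancel]
          _ ≤ ‖y - x‖ + ‖x‖ := norm_add_le _ _
          _ = ‖x‖ + ‖y - x‖ := by ring
      linarith
    apply memD y hyRh
    -- the chart inequality at y
    set a := ‖tilde y - tilde x‖ with hadef
    set b := |vert y - vert x| with hbdef
    have hab : a ^ 2 + b ^ 2 = ‖y - x‖ ^ 2 := by
      rw [norm_split (y - x), tilde_sub, vert_sub, sq_abs]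
    have hcs : Λ₀ * a + b ≤ Real.sqrt (1 + Λ₀ ^ 2) * ‖y - x‖ := by
      have := key_cs Λ₀ a b hΛ₀.le (norm_nonneg _) (abs_nonneg _)
      rwa [hab, Real.sqrt_sq (norm_nonneg _)] at this
    have hsle : Real.sqrt (1 + Λ₀ ^ 2) ≤ s := by
      rw [hsdef]
      apply Real.sqrt_le_sqrt
      nlinarith
    have hkey : Λ₀ * a + b < ρ := by
      have h1 : Real.sqrt (1 + Λ₀ ^ 2) * ‖y - x‖ ≤ s * ‖y - x‖ :=
        mul_le_mul_of_nonneg_right hsle (norm_nonneg _)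
      have h2 : s * ‖y - x‖ < s * (s⁻¹ * ρ) := by
        exact mul_lt_mul_of_pos_left hdist hspos
      have h3 : s * (s⁻¹ * ρ) = ρ := by
        field_simp
      linarith
    have hΨd : |Ψ (tilde y) - Ψ (tilde x)| ≤ Λ₀ * a := hΨlip _ _
    have h1 := abs_le.1 hΨd
    have hvv : vert x - vert y ≤ b := by
      calc vert x - vert y ≤ |vert x - vert y| := le_abs_self _
        _ = b := by rw [hbdef, abs_sub_comm]
    have hρx : ρ = vert x - Ψ (tilde x) := rfl
    linarith [h1.1, h1.2, hvv]
  · -- upper bound: the point z = x - ρ • e is on the frontier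
    set z : EuclideanSpace ℝ (Fin (n + 1)) := x - ρ • e with hzdef
    have htz : tilde z = tilde x := by
      rw [hzdef, tilde_sub, htilde_smul]
      simp
    have hvz : vert z = Ψ (tilde x) := by
      rw [hzdef, vert_sub, hvert_smul]
      simp [hρdef, vrho]
    have hzn : ‖z‖ < Rh := by
      have : ‖z‖ ≤ ‖x‖ + ‖ρ • e‖ := norm_sub_le _ _
      rw [hnorm_smul, abs_of_pos hρ0] at this
      linarith
    have hzF : z ∈ frontier D := by
      rw [hDopen.frontier_eq]
      constructor
      · -- closure
        rw [Metric.mem_closure_iff]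
        intro ε hε
        set t := min ε (Rh - ‖z‖) / 2 with htdef
        have ht0 : 0 < t := by
          apply div_pos _ (by norm_num)
          exact lt_min hε (by linarith)
        refine ⟨z + t • e, ?_, ?_⟩
        · apply memD
          · have h1 : ‖z + t • e‖ ≤ ‖z‖ + ‖t • e‖ := norm_add_le _ _
            rw [hnorm_smul, abs_of_pos ht0] at h1
            have h2 : t ≤ (Rh - ‖z‖) / 2 := by
              rw [htdef]
              gcongr
              exact min_le_right _ _
            linarith
          · have h1 : tilde (z + t • e) = tilde x := by
              have : tilde (z + t • e) = tilde z + tilde (t • e) := rfl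
              rw [this, htilde_smul, htz]; simp
            have h2 : vert (z + t • e) = Ψ (tilde x) + t := by
              have : vert (z + t • e) = vert z + vert (t • e) := rfl
              rw [this, hvert_smul, hvz]
            rw [h1, h2]
            linarith
        · rw [dist_eq_norm]
          have : z - (z + t • e) = -(t • e) := sub_add_cancel_left z (t • e)
          rw [this, norm_neg, hnorm_smul, abs_of_pos ht0]
          have : t ≤ ε / 2 := by
            rw [htdef]; gcongr; exact min_le_left _ _
          linarith
      · -- not in D
        intro hzD
        have := memD' z hzD hzn
        rw [hvz, htz] at this
        exact lt_irrefl _ this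
    have := infDist_le_dist_of_mem (x := x) hzF
    have hdz : dist x z = ρ := by
      rw [dist_eq_norm, hzdef]
      have : x - (x - ρ • e) = ρ • e := sub_sub_cancel x (ρ • e)
      rw [this, hnorm_smul, abs_of_pos hρ0]
    rw [hdz] at this
    exact this
end
end

section
/- (i) If p > α + β̄₂, then condition (F) holds. (ii) If p = α + β₂, ℓ is slowly varying at zero, and there exists c₀ > 0 with Φ₂(r) ≥ c₀ r^{β₂} for all 0 < r ≤ 1, then condition (F) holds. -/
open MeasureTheory Metric Set Filter
open scoped ENNReal NNReal Topology

noncomputable section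

/-- The lower Matuszewska index of a positive function `Φ` at zero. -/
def lowerMatIdx (Φ : ℝ → ℝ) : ℝ :=
  sSup {β : ℝ | ∃ a > 0, ∀ r s : ℝ, 0 < s → s ≤ r → r ≤ 1 → a * (r / s) ^ β ≤ Φ r / Φ s}

/-- Condition (F). -/
def ConditionF (Φ₂ ℓ : ℝ → ℝ) (α p Rh : ℝ) : Prop :=
  ∀ r : ℝ, 0 < r → r ≤ Rh → ∃ C > 0, ∀ b : ℝ, 0 < b → b ≤ r →
    ENNReal.ofReal (C * b ^ (p - α)) ≤
      Filter.liminf (fun s : ℝ => ENNReal.ofReal (Φ₂ (b / r) * ℓ (s / b) / ℓ s))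
        (𝓝[>] (0 : ℝ))

theorem stmt_18 (α p Rh : ℝ) (hα : 0 < α) (hα2 : α < 2) (hRh : 0 < Rh)
    (Φ₂ ℓ : ℝ → ℝ)
    (hΦ₂meas : Measurable Φ₂) (hΦ₂pos : ∀ r : ℝ, 0 < r → 0 < Φ₂ r)
    (hΦ₂one : ∀ r : ℝ, 1 ≤ r → Φ₂ r = 1)
    (b₂ B₂ c₂L c₂U : ℝ) (hb₂ : 0 ≤ b₂) (hbB₂ : b₂ ≤ B₂) (hc₂L : 0 < c₂L) (hc₂U : 0 < c₂U)
    (hΦ₂scale : ∀ r s : ℝ, 0 < s → s ≤ r → r ≤ 1 →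
      c₂L * (r / s) ^ b₂ ≤ Φ₂ r / Φ₂ s ∧ Φ₂ r / Φ₂ s ≤ c₂U * (r / s) ^ B₂)
    (hℓmeas : Measurable ℓ) (hℓpos : ∀ r : ℝ, 0 < r → 0 < ℓ r)
    (hℓone : ∀ r : ℝ, 1 ≤ r → ℓ r = 1)
    (β₁ : ℝ) (hβ₁ : 0 ≤ β₁)
    (hℓscale : ∀ ε : ℝ, 0 < ε → ∃ c > 1, ∀ r s : ℝ, 0 < s → s ≤ r → r ≤ 1 →
      c⁻¹ * (r / s) ^ (-min ε β₁) ≤ ℓ r / ℓ s ∧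
        ℓ r / ℓ s ≤ c * (r / s) ^ min ε (lowerMatIdx Φ₂)) :
    (α + B₂ < p → ConditionF Φ₂ ℓ α p Rh) ∧
    ((p = α + lowerMatIdx Φ₂ ∧
        (∀ lam : ℝ, 1 < lam → Tendsto (fun s => ℓ (lam * s) / ℓ s) (𝓝[>] (0 : ℝ)) (𝓝 1)) ∧
        (∃ c₀ > 0, ∀ r : ℝ, 0 < r → r ≤ 1 → c₀ * r ^ lowerMatIdx Φ₂ ≤ Φ₂ r)) →
      ConditionF Φ₂ ℓ α p Rh) := by
  constructor
  · -- Part (i)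
    intro hp r hr hrR
    set m := lowerMatIdx Φ₂ with hm
    have hεpos : (0:ℝ) < (p - α - B₂) / 2 := by linarith
    set ε := (p - α - B₂) / 2 with hεdef
    obtain ⟨c, hc1, hcs⟩ := hℓscale ε hεpos
    have hc0 : (0:ℝ) < c := lt_trans one_pos hc1
    have hminr : (0:ℝ) < min 1 (r ^ (-(3 * ε))) :=
      lt_min one_pos (Real.rpow_pos_of_pos hr _)
    refine ⟨c⁻¹ * c₂U⁻¹ * r ^ (-B₂) * min 1 (r ^ (-(3 * ε))), by positivity, ?_⟩
    intro b hb hbr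
    have hmem : Ioo (0:ℝ) (min b 1) ∈ 𝓝[>] (0:ℝ) :=
      Ioo_mem_nhdsGT_of_mem ⟨le_refl 0, lt_min hb one_pos⟩
    refine Filter.le_liminf_of_le ?_ ?_
    · isBoundedDefault
    filter_upwards [hmem] with s hs
    obtain ⟨hs0, hsm⟩ := hs
    have hsb : s ≤ b := le_of_lt (lt_of_lt_of_le hsm (min_le_left _ _))
    have hs1 : s ≤ 1 := le_of_lt (lt_of_lt_of_le hsm (min_le_right _ _))
    apply ENNReal.ofReal_le_ofReal
    have hbrpos : 0 < b / r := div_pos hb hr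
    have hbr1 : b / r ≤ 1 := (div_le_one hr).2 hbr
    have hΦpos := hΦ₂pos (b / r) hbrpos
    -- lower bound for Φ₂(b/r)
    have hΦ := (hΦ₂scale 1 (b / r) hbrpos hbr1 le_rfl).2
    rw [hΦ₂one 1 le_rfl] at hΦ
    have hΦlow : c₂U⁻¹ * (b / r) ^ B₂ ≤ Φ₂ (b / r) := by
      rw [div_le_iff₀ hΦpos, one_div, Real.inv_rpow hbrpos.le] at hΦ
      have hpow : (0:ℝ) < (b / r) ^ B₂ := Real.rpow_pos_of_pos hbrpos _
      calc c₂U⁻¹ * (b / r) ^ B₂ = c₂U⁻¹ * (b / r) ^ B₂ * 1 := by ring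
        _ ≤ c₂U⁻¹ * (b / r) ^ B₂ * (c₂U * ((b / r) ^ B₂)⁻¹ * Φ₂ (b / r)) := by
            apply mul_le_mul_of_nonneg_left hΦ (by positivity)
        _ = Φ₂ (b / r) := by field_simp
    -- lower bound for the ℓ ratio
    have hL : c⁻¹ * min (b ^ ε) (b ^ (-ε)) ≤ ℓ (s / b) / ℓ s := by
      rcases le_or_gt b 1 with hb1 | hb1
      · have h := (hcs (s / b) s hs0 (le_div_self hs0.le hb hb1)
          ((div_le_one hb).2 hsb)).1
        have heq : s / b / s = b⁻¹ := by field_simp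
        rw [heq, Real.inv_rpow hb.le, Real.rpow_neg hb.le, inv_inv] at h
        calc c⁻¹ * min (b ^ ε) (b ^ (-ε)) ≤ c⁻¹ * b ^ ε := by
              gcongr
              exact min_le_left _ _
          _ ≤ c⁻¹ * b ^ min ε β₁ :=
              mul_le_mul_of_nonneg_left
                (Real.rpow_le_rpow_of_exponent_ge hb hb1 (min_le_left _ _))
                (by positivity)
          _ ≤ ℓ (s / b) / ℓ s := h
      · have hsbpos : 0 < s / b := div_pos hs0 hb
        have h := (hcs s (s / b) hsbpos (div_le_self hs0.le hb1.le) hs1).2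
        have heq : s / (s / b) = b := by field_simp
        rw [heq] at h
        have hls := hℓpos s hs0
        have hlsb := hℓpos (s / b) hsbpos
        have hkpos : (0:ℝ) < b ^ min ε m := Real.rpow_pos_of_pos hb _
        have hinv : (c * b ^ min ε m)⁻¹ ≤ (ℓ s / ℓ (s / b))⁻¹ :=
          inv_anti₀ (div_pos hls hlsb) h
        rw [inv_div] at hinv
        calc c⁻¹ * min (b ^ ε) (b ^ (-ε)) ≤ c⁻¹ * b ^ (-ε) := by
              gcongr
              exact min_le_right _ _
          _ ≤ c⁻¹ * b ^ (-min ε m) :=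
              mul_le_mul_of_nonneg_left
                (Real.rpow_le_rpow_of_exponent_le hb1.le
                  (neg_le_neg (min_le_left _ _)))
                (by positivity)
          _ = (c * b ^ min ε m)⁻¹ := by
              rw [Real.rpow_neg hb.le, mul_inv]
          _ ≤ ℓ (s / b) / ℓ s := hinv
    -- key exponent inequality
    have h1 : min 1 (r ^ (-(3 * ε))) ≤ b ^ (-ε) := by
      rcases le_or_gt b 1 with hb1 | hb1
      · exact le_trans (min_le_left _ _)
          (Real.one_le_rpow_of_pos_of_le_one_of_nonpos hb hb1 (by linarith))
      · refine le_trans (min_le_right _ _) ?_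
        have hr1 : (1:ℝ) ≤ r := le_trans hb1.le hbr
        calc r ^ (-(3 * ε)) ≤ r ^ (-ε) :=
              Real.rpow_le_rpow_of_exponent_le hr1 (by linarith)
          _ ≤ b ^ (-ε) := Real.rpow_le_rpow_of_nonpos hb hbr (by linarith)
    have h2 : min 1 (r ^ (-(3 * ε))) ≤ b ^ (-(3 * ε)) := by
      rcases le_or_gt b 1 with hb1 | hb1
      · exact le_trans (min_le_left _ _)
          (Real.one_le_rpow_of_pos_of_le_one_of_nonpos hb hb1 (by linarith))
      · exact le_trans (min_le_right _ _)
          (Real.rpow_le_rpow_of_nonpos hb hbr (by linarith))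
    have hkey : min 1 (r ^ (-(3 * ε))) * b ^ (2 * ε) ≤ min (b ^ ε) (b ^ (-ε)) := by
      have hb2ε : (0:ℝ) < b ^ (2 * ε) := Real.rpow_pos_of_pos hb _
      refine le_min ?_ ?_
      · calc min 1 (r ^ (-(3 * ε))) * b ^ (2 * ε) ≤ b ^ (-ε) * b ^ (2 * ε) := by
              gcongr
          _ = b ^ ε := by
              rw [← Real.rpow_add hb]; ring_nf
      · calc min 1 (r ^ (-(3 * ε))) * b ^ (2 * ε) ≤ b ^ (-(3 * ε)) * b ^ (2 * ε) := by
              gcongr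
          _ = b ^ (-ε) := by
              rw [← Real.rpow_add hb]; ring_nf
    have hpα : p - α = B₂ + 2 * ε := by rw [hεdef]; ring
    have hfin : c⁻¹ * c₂U⁻¹ * r ^ (-B₂) * min 1 (r ^ (-(3 * ε))) * b ^ (p - α)
        ≤ (c₂U⁻¹ * (b / r) ^ B₂) * (c⁻¹ * min (b ^ ε) (b ^ (-ε))) := by
      rw [hpα, Real.rpow_add hb, Real.div_rpow hb.le hr.le, Real.rpow_neg hr.le,
        div_eq_mul_inv]
      have hP : (0:ℝ) ≤ c⁻¹ * c₂U⁻¹ * (r ^ B₂)⁻¹ * b ^ B₂ := by positivity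
      have h := mul_le_mul_of_nonneg_left hkey hP
      calc c⁻¹ * c₂U⁻¹ * (r ^ B₂)⁻¹ * min 1 (r ^ (-(3 * ε))) * (b ^ B₂ * b ^ (2 * ε))
          = (c⁻¹ * c₂U⁻¹ * (r ^ B₂)⁻¹ * b ^ B₂) * (min 1 (r ^ (-(3 * ε))) * b ^ (2 * ε)) := by
            ring
        _ ≤ (c⁻¹ * c₂U⁻¹ * (r ^ B₂)⁻¹ * b ^ B₂) * min (b ^ ε) (b ^ (-ε)) := h
        _ = c₂U⁻¹ * (b ^ B₂ * (r ^ B₂)⁻¹) * (c⁻¹ * min (b ^ ε) (b ^ (-ε))) := by ring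
    have hminb : (0:ℝ) < min (b ^ ε) (b ^ (-ε)) :=
      lt_min (Real.rpow_pos_of_pos hb _) (Real.rpow_pos_of_pos hb _)
    calc c⁻¹ * c₂U⁻¹ * r ^ (-B₂) * min 1 (r ^ (-(3 * ε))) * b ^ (p - α)
        ≤ (c₂U⁻¹ * (b / r) ^ B₂) * (c⁻¹ * min (b ^ ε) (b ^ (-ε))) := hfin
      _ ≤ Φ₂ (b / r) * (ℓ (s / b) / ℓ s) := by
          apply mul_le_mul hΦlow hL (by positivity) hΦpos.le
      _ = Φ₂ (b / r) * ℓ (s / b) / ℓ s := (mul_div_assoc _ _ _).symm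
  · -- Part (ii)
    rintro ⟨hpm, hslow, c₀, hc₀, hΦlow⟩ r hr hrR
    set m := lowerMatIdx Φ₂ with hm
    have hrm : (0:ℝ) < r ^ m := Real.rpow_pos_of_pos hr _
    refine ⟨c₀ / r ^ m, by positivity, ?_⟩
    intro b hb hbr
    have hbrpos : 0 < b / r := div_pos hb hr
    have hbr1 : b / r ≤ 1 := (div_le_one hr).2 hbr
    have hrat : Tendsto (fun s => ℓ (s / b) / ℓ s) (𝓝[>] (0:ℝ)) (𝓝 1) := by
      rcases lt_trichotomy b 1 with hb1 | hb1 | hb1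
      · have hinv : 1 < b⁻¹ := (one_lt_inv₀ hb).2 hb1
        refine (hslow b⁻¹ hinv).congr fun s => ?_
        rw [show s / b = b⁻¹ * s from div_eq_inv_mul s b]
      · subst hb1
        refine Filter.Tendsto.congr' ?_ tendsto_const_nhds
        filter_upwards [self_mem_nhdsWithin] with s hs
        have : ℓ s ≠ 0 := ne_of_gt (hℓpos s hs)
        simp [div_self this]
      · have hmap : Tendsto (fun s : ℝ => s / b) (𝓝[>] (0:ℝ)) (𝓝[>] (0:ℝ)) := by
          apply tendsto_nhdsWithin_of_tendsto_nhds_of_eventually_within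
          · have h0 : Tendsto (fun s : ℝ => s / b) (𝓝 (0:ℝ)) (𝓝 (0 / b)) :=
              tendsto_id.div_const b
            simpa using h0.mono_left nhdsWithin_le_nhds
          · filter_upwards [self_mem_nhdsWithin] with s hs
            exact div_pos hs hb
        have h2 := (hslow b hb1).comp hmap
        have h3 : Tendsto (fun s => ℓ s / ℓ (s / b)) (𝓝[>] (0:ℝ)) (𝓝 1) := by
          refine h2.congr fun s => ?_
          simp only [Function.comp_apply]
          rw [show b * (s / b) = s from by field_simp]
        have h4 := h3.inv₀ one_ne_zero
        rw [inv_one] at h4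
        refine h4.congr fun s => ?_
        rw [inv_div]
    have hK : Tendsto (fun s : ℝ => ENNReal.ofReal (Φ₂ (b / r) * ℓ (s / b) / ℓ s))
        (𝓝[>] (0:ℝ)) (𝓝 (ENNReal.ofReal (Φ₂ (b / r)))) := by
      have h5 := hrat.const_mul (Φ₂ (b / r))
      rw [mul_one] at h5
      have h6 : Tendsto (fun s : ℝ => Φ₂ (b / r) * ℓ (s / b) / ℓ s) (𝓝[>] (0:ℝ))
          (𝓝 (Φ₂ (b / r))) := by
        refine h5.congr fun s => ?_
        rw [mul_div_assoc]
      exact (ENNReal.continuous_ofReal.tendsto _).comp h6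
    rw [hK.liminf_eq]
    apply ENNReal.ofReal_le_ofReal
    have hplow := hΦlow (b / r) hbrpos hbr1
    have hpα : p - α = m := by rw [hpm]; ring
    calc c₀ / r ^ m * b ^ (p - α) = c₀ * (b / r) ^ m := by
          rw [hpα, Real.div_rpow hb.le hr.le]; ring
      _ ≤ Φ₂ (b / r) := hplow
end
end
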